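/- Fix real parameters σ > 0, γ > 0, g > 0 and η ≠ 0; set ω = σγη and β = 2σ²/g, and define u(s) = cosh(ωs) + (ω/β)sinh(ωs), v(s) = cosh(ωs) + (β/ω)sinh(ωs), a(s) = g·v(s)/u(s), P(s) = P₀/u(s), and Q(s) = (Q₀ − ηβ(u(s) − 1)/ω²)/v(s) for given P₀, Q₀ ∈ ℝ. Then for every t ≥ 0: (i) ∫₀ᵗ Q(s)² ds = (η²/ω²)·(t·v(t) − sinh(ωt)/ω − 2β(cosh(ωt) − 1)/ω²)/v(t) − 2ηQ₀·((cosh(ωt) − 1)/ω²)·(1/v(t)) + Q₀²·(sinh(ωt)/ω)·(1/v(t)); (ii) ∫₀ᵗ P(s)² ds = P₀²·(sinh(ωt)/ω)·(1/u(t)); (iii) ∫₀ᵗ Q(s)P(s)/a(s) ds = (P₀Q₀/g)·(sinh(ωt)/ω)·(1/v(t)) − (P₀η/g)·((cosh(ωt) − 1)/ω²)·(1/v(t)). -/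

import Mathlib

lemma aux_one_le (ω m x : ℝ) (hm : 0 < m * ω) (hx : 0 ≤ x) :
    1 ≤ Real.cosh (ω * x) + m * Real.sinh (ω * x) := by
  have h1 := Real.one_le_cosh (ω * x)
  have h2 : 0 ≤ m * Real.sinh (ω * x) := by
    rcases lt_trichotomy ω 0 with h | h | h
    · have hm' : m < 0 := by nlinarith
      have hsn : Real.sinh (ω * x) ≤ 0 :=
        Real.sinh_nonpos_iff.2 (mul_nonpos_of_nonpos_of_nonneg h.le hx)
      nlinarith
    · simp [h] at hm
    · have hm' : 0 < m := by nlinarith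
      exact mul_nonneg hm'.le (Real.sinh_nonneg_iff.2 (mul_nonneg h.le hx))
  linarith

set_option maxHeartbeats 2000000 in
theorem stmt5 (σ γ g η : ℝ) (hσ : 0 < σ) (hγ : 0 < γ) (hg : 0 < g) (hη : η ≠ 0)
    (P₀ Q₀ : ℝ) (ω β : ℝ) (hω : ω = σ * γ * η) (hβ : β = 2 * σ ^ 2 / g)
    (u v a P Q : ℝ → ℝ)
    (hu : ∀ s, u s = Real.cosh (ω * s) + (ω / β) * Real.sinh (ω * s))
    (hv : ∀ s, v s = Real.cosh (ω * s) + (β / ω) * Real.sinh (ω * s))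
    (ha : ∀ s, a s = g * v s / u s)
    (hP : ∀ s, P s = P₀ / u s)
    (hQ : ∀ s, Q s = (Q₀ - η * β * (u s - 1) / ω ^ 2) / v s) :
    ∀ t ≥ 0,
      (∫ s in (0:ℝ)..t, (Q s) ^ 2) =
        (η ^ 2 / ω ^ 2) *
            ((t * v t - Real.sinh (ω * t) / ω - 2 * β * (Real.cosh (ω * t) - 1) / ω ^ 2) / v t)
          - 2 * η * Q₀ * ((Real.cosh (ω * t) - 1) / ω ^ 2) * (1 / v t)
          + Q₀ ^ 2 * (Real.sinh (ω * t) / ω) * (1 / v t) ∧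
      (∫ s in (0:ℝ)..t, (P s) ^ 2) = P₀ ^ 2 * (Real.sinh (ω * t) / ω) * (1 / u t) ∧
      (∫ s in (0:ℝ)..t, Q s * P s / a s) =
        (P₀ * Q₀ / g) * (Real.sinh (ω * t) / ω) * (1 / v t)
          - (P₀ * η / g) * ((Real.cosh (ω * t) - 1) / ω ^ 2) * (1 / v t) := by
  have hβ0 : 0 < β := by rw [hβ]; positivity
  have hω0 : ω ≠ 0 := by rw [hω]; positivity
  have hQ' := funext hQ; subst hQ'
  have hP' := funext hP; subst hP'
  have ha' := funext ha; subst ha'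
  have hu' := funext hu; subst hu'
  have hv' := funext hv; subst hv'
  have hul : ∀ x : ℝ, 0 ≤ x → 1 ≤ Real.cosh (ω * x) + (ω / β) * Real.sinh (ω * x) := by
    intro x hx
    refine aux_one_le ω (ω / β) x ?_ hx
    have : ω / β * ω = ω ^ 2 / β := by ring
    rw [this]; positivity
  have hvl : ∀ x : ℝ, 0 ≤ x → 1 ≤ Real.cosh (ω * x) + (β / ω) * Real.sinh (ω * x) := by
    intro x hx
    refine aux_one_le ω (β / ω) x ?_ hx
    have : β / ω * ω = β := by field_simp
    rw [this]; exact hβ0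
  intro t ht
  have hucont : Continuous (fun s : ℝ => Real.cosh (ω * s) + (ω / β) * Real.sinh (ω * s)) := by
    fun_prop
  have hvcont : Continuous (fun s : ℝ => Real.cosh (ω * s) + (β / ω) * Real.sinh (ω * s)) := by
    fun_prop
  have hune : ∀ x ∈ Set.uIcc (0:ℝ) t, Real.cosh (ω * x) + (ω / β) * Real.sinh (ω * x) ≠ 0 := by
    intro x hx
    rw [Set.uIcc_of_le ht] at hx
    have := hul x hx.1; linarith
  have hvne : ∀ x ∈ Set.uIcc (0:ℝ) t, Real.cosh (ω * x) + (β / ω) * Real.sinh (ω * x) ≠ 0 := by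
    intro x hx
    rw [Set.uIcc_of_le ht] at hx
    have := hvl x hx.1; linarith
  refine ⟨?_, ?_, ?_⟩
  · -- ∫ Q²
    have key : (∫ s in (0:ℝ)..t,
        ((Q₀ - η * β * ((Real.cosh (ω * s) + ω / β * Real.sinh (ω * s)) - 1) / ω ^ 2) /
          (Real.cosh (ω * s) + β / ω * Real.sinh (ω * s))) ^ 2) =
        (fun s : ℝ => (η ^ 2 / ω ^ 2) *
            ((s * (Real.cosh (ω * s) + β / ω * Real.sinh (ω * s)) - Real.sinh (ω * s) / ω -
              2 * β * (Real.cosh (ω * s) - 1) / ω ^ 2) /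
              (Real.cosh (ω * s) + β / ω * Real.sinh (ω * s)))
          - 2 * η * Q₀ * ((Real.cosh (ω * s) - 1) / ω ^ 2 /
              (Real.cosh (ω * s) + β / ω * Real.sinh (ω * s)))
          + Q₀ ^ 2 * (Real.sinh (ω * s) / ω /
              (Real.cosh (ω * s) + β / ω * Real.sinh (ω * s)))) t -
        (fun s : ℝ => (η ^ 2 / ω ^ 2) *
            ((s * (Real.cosh (ω * s) + β / ω * Real.sinh (ω * s)) - Real.sinh (ω * s) / ω -
              2 * β * (Real.cosh (ω * s) - 1) / ω ^ 2) /
              (Real.cosh (ω * s) + β / ω * Real.sinh (ω * s)))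
          - 2 * η * Q₀ * ((Real.cosh (ω * s) - 1) / ω ^ 2 /
              (Real.cosh (ω * s) + β / ω * Real.sinh (ω * s)))
          + Q₀ ^ 2 * (Real.sinh (ω * s) / ω /
              (Real.cosh (ω * s) + β / ω * Real.sinh (ω * s)))) 0 := by
      apply intervalIntegral.integral_eq_sub_of_hasDerivAt
      · intro x hx
        have hux := hune x hx
        have hvx := hvne x hx
        have hid : HasDerivAt (fun s : ℝ => ω * s) ω x := by
          simpa using (hasDerivAt_id x).const_mul ω
        have hs := hid.sinh
        have hc := hid.cosh
        have hV : HasDerivAt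
            (fun s : ℝ => Real.cosh (ω * s) + β / ω * Real.sinh (ω * s))
            (Real.sinh (ω * x) * ω + β / ω * (Real.cosh (ω * x) * ω)) x :=
          hc.add (hs.const_mul _)
        have hN : HasDerivAt
            (fun s : ℝ => s * (Real.cosh (ω * s) + β / ω * Real.sinh (ω * s)) -
              Real.sinh (ω * s) / ω - 2 * β * (Real.cosh (ω * s) - 1) / ω ^ 2)
            (1 * (Real.cosh (ω * x) + β / ω * Real.sinh (ω * x)) +
              x * (Real.sinh (ω * x) * ω + β / ω * (Real.cosh (ω * x) * ω)) -
              Real.cosh (ω * x) * ω / ω -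
              2 * β * (Real.sinh (ω * x) * ω) / ω ^ 2) x := by
          exact (((hasDerivAt_id x).mul hV).sub (hs.div_const ω)).sub
            (((hc.sub_const 1).const_mul (2 * β)).div_const (ω ^ 2))
        have hD := (((hN.div hV hvx).const_mul (η ^ 2 / ω ^ 2)).sub
            ((((hc.sub_const 1).div_const (ω ^ 2)).div hV hvx).const_mul (2 * η * Q₀))).add
            (((hs.div_const ω).div hV hvx).const_mul (Q₀ ^ 2))
        refine HasDerivAt.congr_deriv hD ?_
        symm
        have h1 := Real.cosh_sq_sub_sinh_sq (ω * x)
        set c := Real.cosh (ω * x) with hcdef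
        set h := Real.sinh (ω * x) with hhdef
        have hN1 : c * ω / ω * (c + β / ω * h) - h / ω * (h * ω + β / ω * (c * ω)) = 1 := by
          field_simp
          linear_combination ω * h1
        have hN2 : h * ω / ω ^ 2 * (c + β / ω * h) - (c - 1) / ω ^ 2 * (h * ω + β / ω * (c * ω)) =
            β * ((c + ω / β * h) - 1) / ω ^ 2 := by
          field_simp
          linear_combination (-β) * h1
        rw [hN1, hN2]
        field_simp at hux hvx
        have hux' : β * c + ω * h ≠ 0 := by
          have := (div_ne_zero_iff.1 hux).1; rwa [mul_comm c β] at this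
        have hvx' : c * ω + β * h ≠ 0 := (div_ne_zero_iff.1 hvx).1
        field_simp
        linear_combination (-(η ^ 2 * β ^ 2)) * h1
      · apply ContinuousOn.intervalIntegrable
        exact (((Continuous.continuousOn (by fun_prop)).div
          hvcont.continuousOn hvne).pow 2)
    rw [key]
    simp [Real.sinh_zero, Real.cosh_zero]
    ring
  · -- ∫ P²
    have key : (∫ s in (0:ℝ)..t,
        (P₀ / (Real.cosh (ω * s) + (ω / β) * Real.sinh (ω * s))) ^ 2) =
        (fun s : ℝ => P₀ ^ 2 * (Real.sinh (ω * s) / ω /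
          (Real.cosh (ω * s) + (ω / β) * Real.sinh (ω * s)))) t -
        (fun s : ℝ => P₀ ^ 2 * (Real.sinh (ω * s) / ω /
          (Real.cosh (ω * s) + (ω / β) * Real.sinh (ω * s)))) 0 := by
      apply intervalIntegral.integral_eq_sub_of_hasDerivAt
      · intro x hx
        have hux := hune x hx
        have hid : HasDerivAt (fun s : ℝ => ω * s) ω x := by
          simpa using (hasDerivAt_id x).const_mul ω
        have hs := hid.sinh
        have hc := hid.cosh
        have hden : HasDerivAt
            (fun s : ℝ => Real.cosh (ω * s) + (ω / β) * Real.sinh (ω * s))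
            (Real.sinh (ω * x) * ω + (ω / β) * (Real.cosh (ω * x) * ω)) x :=
          hc.add (hs.const_mul _)
        have hnum : HasDerivAt (fun s : ℝ => Real.sinh (ω * s) / ω)
            (Real.cosh (ω * x) * ω / ω) x := hs.div_const ω
        have := (hnum.div hden hux).const_mul (P₀ ^ 2)
        refine HasDerivAt.congr_deriv this ?_
        symm
        have h1 := Real.cosh_sq_sub_sinh_sq (ω * x)
        set c := Real.cosh (ω * x) with hc
        set h := Real.sinh (ω * x) with hh
        have hN : c * ω / ω * (c + ω / β * h) - h / ω * (h * ω + ω / β * (c * ω)) = 1 := by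
          field_simp
          linear_combination β * h1
        rw [hN, div_pow]
        ring
      · apply ContinuousOn.intervalIntegrable
        exact ((continuousOn_const.div hucont.continuousOn hune).pow 2)
    rw [key]
    simp [Real.sinh_zero, Real.cosh_zero]
    ring
  · -- ∫ QP/a
    have hane : ∀ x ∈ Set.uIcc (0:ℝ) t,
        g * (Real.cosh (ω * x) + β / ω * Real.sinh (ω * x)) /
          (Real.cosh (ω * x) + ω / β * Real.sinh (ω * x)) ≠ 0 := by
      intro x hx
      exact div_ne_zero (mul_ne_zero hg.ne' (hvne x hx)) (hune x hx)
    have key : (∫ s in (0:ℝ)..t,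
        (Q₀ - η * β * ((Real.cosh (ω * s) + ω / β * Real.sinh (ω * s)) - 1) / ω ^ 2) /
          (Real.cosh (ω * s) + β / ω * Real.sinh (ω * s)) *
          (P₀ / (Real.cosh (ω * s) + ω / β * Real.sinh (ω * s))) /
          (g * (Real.cosh (ω * s) + β / ω * Real.sinh (ω * s)) /
            (Real.cosh (ω * s) + ω / β * Real.sinh (ω * s)))) =
        (fun s : ℝ => (P₀ * Q₀ / g) * (Real.sinh (ω * s) / ω /
            (Real.cosh (ω * s) + β / ω * Real.sinh (ω * s)))
          - (P₀ * η / g) * ((Real.cosh (ω * s) - 1) / ω ^ 2 /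
            (Real.cosh (ω * s) + β / ω * Real.sinh (ω * s)))) t -
        (fun s : ℝ => (P₀ * Q₀ / g) * (Real.sinh (ω * s) / ω /
            (Real.cosh (ω * s) + β / ω * Real.sinh (ω * s)))
          - (P₀ * η / g) * ((Real.cosh (ω * s) - 1) / ω ^ 2 /
            (Real.cosh (ω * s) + β / ω * Real.sinh (ω * s)))) 0 := by
      apply intervalIntegral.integral_eq_sub_of_hasDerivAt
      · intro x hx
        have hux := hune x hx
        have hvx := hvne x hx
        have hid : HasDerivAt (fun s : ℝ => ω * s) ω x := by
          simpa using (hasDerivAt_id x).const_mul ω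
        have hs := hid.sinh
        have hc := hid.cosh
        have hV : HasDerivAt
            (fun s : ℝ => Real.cosh (ω * s) + β / ω * Real.sinh (ω * s))
            (Real.sinh (ω * x) * ω + β / ω * (Real.cosh (ω * x) * ω)) x :=
          hc.add (hs.const_mul _)
        have hD := (((hs.div_const ω).div hV hvx).const_mul (P₀ * Q₀ / g)).sub
            ((((hc.sub_const 1).div_const (ω ^ 2)).div hV hvx).const_mul (P₀ * η / g))
        refine HasDerivAt.congr_deriv hD ?_
        symm
        have h1 := Real.cosh_sq_sub_sinh_sq (ω * x)
        set c := Real.cosh (ω * x) with hcdef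
        set h := Real.sinh (ω * x) with hhdef
        have hN1 : c * ω / ω * (c + β / ω * h) - h / ω * (h * ω + β / ω * (c * ω)) = 1 := by
          field_simp
          linear_combination ω * h1
        have hN2 : h * ω / ω ^ 2 * (c + β / ω * h) - (c - 1) / ω ^ 2 * (h * ω + β / ω * (c * ω)) =
            β * ((c + ω / β * h) - 1) / ω ^ 2 := by
          field_simp
          linear_combination (-β) * h1
        rw [hN1, hN2]
        field_simp at hux hvx
        have hux' : β * c + ω * h ≠ 0 := by
          have := (div_ne_zero_iff.1 hux).1; rwa [mul_comm c β] at this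
        have hvx' : c * ω + β * h ≠ 0 := (div_ne_zero_iff.1 hvx).1
        field_simp
      · apply ContinuousOn.intervalIntegrable
        apply ContinuousOn.div
        · exact ((Continuous.continuousOn (by fun_prop)).div
            hvcont.continuousOn hvne).mul
            (continuousOn_const.div hucont.continuousOn hune)
        · exact (continuousOn_const.mul hvcont.continuousOn).div
            hucont.continuousOn hune
        · exact hane
    rw [key]
    simp [Real.sinh_zero, Real.cosh_zero]
    ring
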